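/- arXiv:2103.06797 — 2 statements merged into one kernel-verified Lean document; each statement's English description precedes it below -/
import Mathlib

section
/- Let X be a second-countable topological space equipped with its Borel σ-algebra, let Y be a metric space, and let Q and P be Borel probability measures on X with supp(Q) = supp(P). Let ℓᵃ : Y × Y → ℝ be a p-distance (ℓᵃ(y,y') ≥ 0 for all y, y', and ℓᵃ(y,y') = 0 if and only if y = y'), and let ℓ : Y × Y → ℝ be a nonnegative function (the common objective and constraint loss ℓᵒ = ℓᶜ). Let H be a set of continuous functions from X to Y, let G = H, let f : X → Y be Borel measurable, and let ε ≥ 0. Suppose g ∈ G satisfies ∫ ℓ(f(x), g(x)) dQ(x) ≤ ε, all the relevant integrands are measurable, and h ∈ H attains the infimum of h' ↦ ∫ ℓᵃ(g(x), h'(x)) dP(x) over h' ∈ H. Then ∫ ℓ(f(x), h(x)) dQ(x) ≤ ε. (In particular, the optimal value of the expected BODAME problem is at most ε.) -/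
open MeasureTheory

/-- The topological support of a Borel measure: the set of points all of whose
open neighborhoods have positive measure. -/
def measureSupport {X : Type*} [TopologicalSpace X] [MeasurableSpace X]
    (μ : Measure X) : Set X :=
  {x | ∀ U ∈ nhds x, 0 < μ U}


lemma measureSupport_compl_null {X : Type*} [TopologicalSpace X] [SecondCountableTopology X]
    [MeasurableSpace X] (μ : Measure X) : μ (measureSupport μ)ᶜ = 0 := by
  classical
  set b := TopologicalSpace.countableBasis X with hb
  have hbasis := TopologicalSpace.isBasis_countableBasis X
  set S : Set (Set X) := {U ∈ b | μ U = 0} with hS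
  have hScount : S.Countable :=
    (TopologicalSpace.countable_countableBasis X).mono (fun U hU => hU.1)
  have hsub : (measureSupport μ)ᶜ ⊆ ⋃₀ S := by
    intro x hx
    simp only [measureSupport, Set.mem_compl_iff, Set.mem_setOf_eq, not_forall] at hx
    obtain ⟨U, hU, hUpos⟩ := hx
    have hU0 : μ U = 0 := by
      rcases eq_or_lt_of_le (zero_le : 0 ≤ μ U) with h | h
      · exact h.symm
      · exact absurd h hUpos
    obtain ⟨V, hVb, hxV, hVU⟩ := hbasis.mem_nhds_iff.mp hU
    exact ⟨V, ⟨hVb, le_antisymm (le_trans (measure_mono hVU) hU0.le) zero_le⟩, hxV⟩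
  have : μ (⋃₀ S) = 0 := (measure_sUnion_null_iff hScount).mpr fun U hU => hU.2
  exact le_antisymm (le_trans (measure_mono hsub) this.le) zero_le

/-- **Sufficient condition for almost `0` optimal value (Theorem 1).**
If the attacker's loss `ℓᵃ` is a p-distance, the objective and constraint losses coincide
(`ℓᵒ = ℓᶜ = ℓ`, nonnegative), `supp Q = supp P`, and the attacker's class `H` equals the
defender's surrogate class `G` (a set of continuous functions), then for any feasible
surrogate `g` (i.e. `∫ ℓ(f, g) dQ ≤ ε`) and any attacker model `h` attaining the infimum
of `h' ↦ ∫ ℓᵃ(g, h') dP` over `H`, the objective value satisfies `∫ ℓ(f, h) dQ ≤ ε`.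
Integrals of the nonnegative losses are taken as lower integrals of `ENNReal.ofReal`. -/
theorem bodame_almost_zero_optimal_value
    {X : Type*} [TopologicalSpace X] [SecondCountableTopology X]
    [MeasurableSpace X] [BorelSpace X]
    {Y : Type*} [MetricSpace Y] [MeasurableSpace Y] [BorelSpace Y]
    (Q P : Measure X) [IsProbabilityMeasure Q] [IsProbabilityMeasure P]
    (hsupp : measureSupport Q = measureSupport P)
    (ℓa ℓ : Y → Y → ℝ)
    (hℓa_nonneg : ∀ y y', 0 ≤ ℓa y y')
    (hℓa_zero : ∀ y y', ℓa y y' = 0 ↔ y = y')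
    (hℓ_nonneg : ∀ y y', 0 ≤ ℓ y y')
    (H : Set (X → Y)) (hH : ∀ h ∈ H, Continuous h)
    (f : X → Y) (hf : Measurable f)
    (ε : ℝ) (hε : 0 ≤ ε)
    -- the surrogate model `g ∈ G = H`, feasible for the constraint
    (g : X → Y) (hgH : g ∈ H)
    (hg_feas : ∫⁻ x, ENNReal.ofReal (ℓ (f x) (g x)) ∂Q ≤ ENNReal.ofReal ε)
    -- measurability of the relevant integrands
    (hmeas_a : ∀ h' ∈ H, Measurable fun x => ℓa (g x) (h' x))
    (hmeas_o : ∀ h' ∈ H, Measurable fun x => ℓ (f x) (h' x))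
    -- the attacker's model `h` attains the infimum over `H`
    (h : X → Y) (hhH : h ∈ H)
    (hmin : ∀ h' ∈ H, ∫⁻ x, ENNReal.ofReal (ℓa (g x) (h x)) ∂P
              ≤ ∫⁻ x, ENNReal.ofReal (ℓa (g x) (h' x)) ∂P) :
    ∫⁻ x, ENNReal.ofReal (ℓ (f x) (h x)) ∂Q ≤ ENNReal.ofReal ε := by
  -- Step 1: the minimal attack value is 0, since g ∈ H and ℓᵃ(g,g)=0
  have hzero : ∫⁻ x, ENNReal.ofReal (ℓa (g x) (h x)) ∂P = 0 := by
    have := hmin g hgH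
    have hgg : ∫⁻ x, ENNReal.ofReal (ℓa (g x) (g x)) ∂P = 0 := by
      simp [(hℓa_zero _ _).mpr rfl]
    exact le_antisymm (hgg ▸ this) zero_le
  -- Step 2: g = h P-a.e.
  have hae : ∀ᵐ x ∂P, g x = h x := by
    have hm : Measurable fun x => ENNReal.ofReal (ℓa (g x) (h x)) :=
      (hmeas_a h hhH).ennreal_ofReal
    have := (lintegral_eq_zero_iff hm).mp hzero
    filter_upwards [this] with x hx
    have : ℓa (g x) (h x) = 0 := by
      have := ENNReal.ofReal_eq_zero.mp hx
      exact le_antisymm this (hℓa_nonneg _ _)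
    exact (hℓa_zero _ _).mp this
  -- Step 3: the equality set is closed, so its complement is outside supp P = supp Q
  set E : Set X := {x | g x = h x} with hE
  have hEclosed : IsClosed E := isClosed_eq (hH g hgH) (hH h hhH)
  have hPEc : P Eᶜ = 0 := hae
  have hEc_sub : Eᶜ ⊆ (measureSupport P)ᶜ := by
    intro x hx hxsupp
    have : (0 : ENNReal) < P Eᶜ := hxsupp Eᶜ (hEclosed.isOpen_compl.mem_nhds hx)
    simp [hPEc] at this
  have hQEc : Q Eᶜ = 0 := by
    have : Eᶜ ⊆ (measureSupport Q)ᶜ := hsupp ▸ hEc_sub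
    exact le_antisymm (le_trans (measure_mono this) (measureSupport_compl_null Q).le)
      zero_le
  -- Step 4: g = h Q-a.e., so the two integrals agree
  have haeQ : ∀ᵐ x ∂Q, g x = h x := hQEc
  have : ∫⁻ x, ENNReal.ofReal (ℓ (f x) (h x)) ∂Q
      = ∫⁻ x, ENNReal.ofReal (ℓ (f x) (g x)) ∂Q := by
    refine lintegral_congr_ae ?_
    filter_upwards [haeQ] with x hx
    rw [hx]
  rw [this]
  exact hg_feas
end

section
/- Let ℓᵃ : ℝ × ℝ → ℝ be a p-distance (ℓᵃ(y,y') ≥ 0 for all y, y', and ℓᵃ(y,y') = 0 if and only if y = y') such that all relevant integrands below are measurable. Let Q and P be Borel probability measures on ℝ, both absolutely continuous with respect to Lebesgue measure, with supp(Q) = [a,b] and supp(P) = [c,d] where a < b ≤ c < d. Let L > 0, let H be the set of all L-Lipschitz functions ℝ → ℝ, let f : ℝ → ℝ be L-Lipschitz, and let ε ≥ 0. Then for every K > 0 there exists a measurable function g : ℝ → ℝ such that ∫ (f(x) − g(x))² dQ(x) ≤ ε, the infimum over h ∈ H of ∫ ℓᵃ(g(x), h(x)) dP(x) is attained, and every h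 ∈ H attaining this infimum satisfies ∫ (f(x) − h(x))² dQ(x) ≥ K. (In particular, the optimal value of the expected BODAME problem with squared losses ℓᵒ = ℓᶜ and unrestricted surrogate class G is +∞.) -/
open MeasureTheory

/-- The complement of the support of a Borel measure on `ℝ` is null. -/
lemma measure_compl_measureSupport (μ : Measure ℝ) :
    μ (measureSupport μ)ᶜ = 0 := by
  have hsub : (measureSupport μ)ᶜ ⊆
      ⋃ p : ℚ × ℚ, ⋃ (_ : μ (Set.Ioo (p.1 : ℝ) p.2) = 0), Set.Ioo (p.1 : ℝ) (p.2 : ℝ) := by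
    intro x hx
    simp only [measureSupport, Set.mem_compl_iff, Set.mem_setOf_eq, not_forall] at hx
    obtain ⟨U, hU, hUpos⟩ := hx
    have hU0 : μ U = 0 := by simpa using hUpos
    obtain ⟨l, u, hx', hsubU⟩ := mem_nhds_iff_exists_Ioo_subset.mp hU
    obtain ⟨q, hlq, hqx⟩ := exists_rat_btwn hx'.1
    obtain ⟨r, hxr, hru⟩ := exists_rat_btwn hx'.2
    refine Set.mem_iUnion.mpr ⟨(q, r), Set.mem_iUnion.mpr ⟨?_, hqx, hxr⟩⟩
    exact measure_mono_null (fun y hy => hsubU ⟨hlq.trans hy.1, hy.2.trans hru⟩) hU0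
  exact measure_mono_null hsub
    (measure_iUnion_null fun p => measure_iUnion_null fun h => h)

/-- A.e. every point lies in the support. -/
lemma ae_mem_measureSupport (μ : Measure ℝ) :
    ∀ᵐ x ∂μ, x ∈ measureSupport μ := by
  rw [ae_iff]
  exact measure_compl_measureSupport μ

/-- If two continuous functions agree a.e., they agree on the support. -/
lemma eq_on_measureSupport (μ : Measure ℝ) {u v : ℝ → ℝ}
    (hu : Continuous u) (hv : Continuous v) (hae : ∀ᵐ x ∂μ, u x = v x) :
    ∀ x ∈ measureSupport μ, u x = v x := by
  intro x hx
  by_contra hne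
  have hopen : IsOpen {y | u y ≠ v y} := isOpen_ne_fun hu hv
  have hmem : {y | u y ≠ v y} ∈ nhds x := hopen.mem_nhds hne
  have hpos := hx _ hmem
  have h0 : μ {y | u y ≠ v y} = 0 := by
    rw [ae_iff] at hae
    exact hae
  rw [h0] at hpos
  exact lt_irrefl 0 hpos

/-- **Sufficient condition for infinitely large optimal value (Theorem 2).**
With squared objective/constraint losses, a p-distance attacker loss `ℓᵃ`,
absolutely continuous `Q`, `P` with `supp Q = [a,b]`, `supp P = [c,d]`,
`a < b ≤ c < d`, `L`-Lipschitz true model `f` and attacker class `H` (the set of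
all `L`-Lipschitz functions), and unrestricted measurable surrogate class:
for every `K > 0` there is a feasible surrogate `g` (constraint value `≤ ε`)
such that the attacker's infimum is attained, and every attacker model attaining
it has objective value `≥ K`.  Hence the optimal value of expected BODAME is `∞`.
Integrals of the nonnegative losses are taken as lower integrals of `ENNReal.ofReal`. -/
theorem bodame_infinite_optimal_value
    (ℓa : ℝ → ℝ → ℝ)
    (hℓa_nonneg : ∀ y y', 0 ≤ ℓa y y')
    (hℓa_zero : ∀ y y', ℓa y y' = 0 ↔ y = y')
    (hℓa_meas : Measurable (Function.uncurry ℓa))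
    (Q P : Measure ℝ) [IsProbabilityMeasure Q] [IsProbabilityMeasure P]
    (hQac : Q ≪ MeasureTheory.volume) (hPac : P ≪ MeasureTheory.volume)
    (a b c d : ℝ) (hab : a < b) (hbc : b ≤ c) (hcd : c < d)
    (hQsupp : measureSupport Q = Set.Icc a b)
    (hPsupp : measureSupport P = Set.Icc c d)
    (L : ℝ) (hL : 0 < L)
    (f : ℝ → ℝ) (hf : ∀ x y, |f x - f y| ≤ L * |x - y|)
    (ε : ℝ) (hε : 0 ≤ ε) (K : ℝ) (hK : 0 < K) :
    ∃ g : ℝ → ℝ, Measurable g ∧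
      -- the surrogate is feasible: constraint value at most ε
      (∫⁻ x, ENNReal.ofReal ((f x - g x) ^ 2) ∂Q) ≤ ENNReal.ofReal ε ∧
      -- the attacker's infimum over the L-Lipschitz class is attained
      (∃ h₀ : ℝ → ℝ, (∀ x y, |h₀ x - h₀ y| ≤ L * |x - y|) ∧
        ∀ h' : ℝ → ℝ, (∀ x y, |h' x - h' y| ≤ L * |x - y|) →
          ∫⁻ x, ENNReal.ofReal (ℓa (g x) (h₀ x)) ∂P
            ≤ ∫⁻ x, ENNReal.ofReal (ℓa (g x) (h' x)) ∂P) ∧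
      -- every attacker model attaining the infimum has objective value at least K
      (∀ h : ℝ → ℝ, (∀ x y, |h x - h y| ≤ L * |x - y|) →
        (∀ h' : ℝ → ℝ, (∀ x y, |h' x - h' y| ≤ L * |x - y|) →
          ∫⁻ x, ENNReal.ofReal (ℓa (g x) (h x)) ∂P
            ≤ ∫⁻ x, ENNReal.ofReal (ℓa (g x) (h' x)) ∂P) →
        ENNReal.ofReal K ≤ ∫⁻ x, ENNReal.ofReal ((f x - h x) ^ 2) ∂Q) := by
  -- continuity of Lipschitz functions
  have lip_cont : ∀ u : ℝ → ℝ, (∀ x y, |u x - u y| ≤ L * |x - y|) → Continuous u := by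
    intro u hu
    refine (LipschitzWith.of_dist_le_mul (K := L.toNNReal) fun x y => ?_).continuous
    simpa [Real.dist_eq, Real.coe_toNNReal L hL.le] using hu x y
  have hfc : Continuous f := lip_cont f hf
  -- the shift
  set M : ℝ := 2 * L * (c - a) + Real.sqrt K + 1 with hM
  set h₀ : ℝ → ℝ := fun x => f x + M with hh₀
  have hh₀lip : ∀ x y, |h₀ x - h₀ y| ≤ L * |x - y| := by
    intro x y; simpa [hh₀] using hf x y
  have hh₀c : Continuous h₀ := lip_cont h₀ hh₀lip
  set g : ℝ → ℝ := fun x => if c ≤ x then f x + M else f x with hg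
  have hgm : Measurable g := by
    refine Measurable.ite ?_ ((hfc.measurable).add measurable_const) hfc.measurable
    exact measurableSet_le measurable_const measurable_id
  refine ⟨g, hgm, ?_, ?_, ?_⟩
  · -- feasibility: constraint integral is zero
    have hae : ∀ᵐ x ∂Q, ENNReal.ofReal ((f x - g x) ^ 2) = 0 := by
      have h1 : ∀ᵐ x ∂Q, x ∈ measureSupport Q := ae_mem_measureSupport Q
      have h2 : ∀ᵐ x ∂Q, x ≠ c := by
        rw [ae_iff]
        refine hQac ?_
        simpa using Real.volume_singleton (x := c)
      filter_upwards [h1, h2] with x hx hxc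
      rw [hQsupp] at hx
      have hxc' : ¬ c ≤ x := by
        intro hle
        exact hxc (le_antisymm (hx.2.trans hbc) hle)
      simp [hg, hxc']
    calc ∫⁻ x, ENNReal.ofReal ((f x - g x) ^ 2) ∂Q = ∫⁻ _, 0 ∂Q := lintegral_congr_ae hae
      _ = 0 := lintegral_zero
      _ ≤ ENNReal.ofReal ε := zero_le
  · -- the infimum 0 is attained at h₀
    refine ⟨h₀, hh₀lip, fun h' hh' => ?_⟩
    have hae : ∀ᵐ x ∂P, ENNReal.ofReal (ℓa (g x) (h₀ x)) = 0 := by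
      filter_upwards [ae_mem_measureSupport P] with x hx
      rw [hPsupp] at hx
      have : g x = h₀ x := by simp [hg, hh₀, hx.1]
      simp [this, (hℓa_zero _ _).mpr rfl]
    calc ∫⁻ x, ENNReal.ofReal (ℓa (g x) (h₀ x)) ∂P = ∫⁻ _, 0 ∂P := lintegral_congr_ae hae
      _ = 0 := lintegral_zero
      _ ≤ _ := zero_le
  · -- every minimizer has objective at least K
    intro h hhlip hmin
    have hhc : Continuous h := lip_cont h hhlip
    -- the minimizer's attacker integral is zero
    have hzero₀ : ∀ᵐ x ∂P, ENNReal.ofReal (ℓa (g x) (h₀ x)) = 0 := by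
      filter_upwards [ae_mem_measureSupport P] with x hx
      rw [hPsupp] at hx
      have : g x = h₀ x := by simp [hg, hh₀, hx.1]
      simp [this, (hℓa_zero _ _).mpr rfl]
    have hint0 : ∫⁻ x, ENNReal.ofReal (ℓa (g x) (h x)) ∂P = 0 := by
      refine le_antisymm ?_ zero_le
      calc ∫⁻ x, ENNReal.ofReal (ℓa (g x) (h x)) ∂P
          ≤ ∫⁻ x, ENNReal.ofReal (ℓa (g x) (h₀ x)) ∂P := hmin h₀ hh₀lip
        _ = ∫⁻ _, 0 ∂P := lintegral_congr_ae hzero₀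
        _ = 0 := lintegral_zero
    have hmeas : Measurable fun x => ENNReal.ofReal (ℓa (g x) (h x)) :=
      ENNReal.measurable_ofReal.comp (hℓa_meas.comp (hgm.prodMk hhc.measurable))
    have haezero : ∀ᵐ x ∂P, ENNReal.ofReal (ℓa (g x) (h x)) = 0 := by
      have := (lintegral_eq_zero_iff hmeas).mp hint0
      filter_upwards [this] with x hx using hx
    -- hence h = h₀ P-a.e., hence on supp P, hence at c
    have haeeq : ∀ᵐ x ∂P, h x = h₀ x := by
      filter_upwards [haezero, ae_mem_measureSupport P] with x hx hxs
      rw [hPsupp] at hxs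
      have hgx : g x = h₀ x := by simp [hg, hh₀, hxs.1]
      have hle : ℓa (g x) (h x) ≤ 0 := by
        by_contra hlt
        push_neg at hlt
        rw [ENNReal.ofReal_eq_zero] at hx
        linarith
      have hl0 : ℓa (g x) (h x) = 0 := le_antisymm hle (hℓa_nonneg _ _)
      have hgh : g x = h x := (hℓa_zero _ _).mp hl0
      rw [← hgh]
      exact hgx
    have hsupp_eq : ∀ x ∈ measureSupport P, h x = h₀ x :=
      eq_on_measureSupport P hhc hh₀c haeeq
    have hc_mem : c ∈ measureSupport P := by
      rw [hPsupp]; exact ⟨le_refl c, hcd.le⟩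
    have hhc_val : h c = f c + M := hsupp_eq c hc_mem
    -- pointwise lower bound on [a,b]
    have hbound : ∀ x ∈ Set.Icc a b, K ≤ (f x - h x) ^ 2 := by
      intro x hx
      have hxc : x ≤ c := hx.2.trans hbc
      have h1 : |h x - h c| ≤ L * (c - x) := by
        have := hhlip x c
        rwa [abs_of_nonpos (by linarith : x - c ≤ 0), neg_sub] at this
      have h2 : |f x - f c| ≤ L * (c - x) := by
        have := hf x c
        rwa [abs_of_nonpos (by linarith : x - c ≤ 0), neg_sub] at this
      have hLcx : L * (c - x) ≤ L * (c - a) := by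
        apply mul_le_mul_of_nonneg_left (by linarith [hx.1]) hL.le
      have hhx : h c - L * (c - a) ≤ h x := by
        have := (abs_le.mp h1).1
        linarith
      have hfx : f x ≤ f c + L * (c - a) := by
        have := (abs_le.mp h2).2
        linarith
      have hsq : Real.sqrt K + 1 ≤ h x - f x := by
        rw [hhc_val] at hhx
        rw [hM] at hhx
        linarith
      have hsqrtK : 0 ≤ Real.sqrt K := Real.sqrt_nonneg K
      have : (Real.sqrt K + 1) ^ 2 ≤ (h x - f x) ^ 2 := by
        apply sq_le_sq' <;> nlinarith
      have hKle : K ≤ (Real.sqrt K + 1) ^ 2 := by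
        have := Real.sq_sqrt hK.le
        nlinarith
      have heq : (f x - h x) ^ 2 = (h x - f x) ^ 2 := by ring
      linarith [heq ▸ (hKle.trans this)]
    -- conclude
    have hae : ∀ᵐ x ∂Q, ENNReal.ofReal K ≤ ENNReal.ofReal ((f x - h x) ^ 2) := by
      filter_upwards [ae_mem_measureSupport Q] with x hx
      rw [hQsupp] at hx
      exact ENNReal.ofReal_le_ofReal (hbound x hx)
    calc ENNReal.ofReal K = ∫⁻ _, ENNReal.ofReal K ∂Q := by
          rw [lintegral_const, measure_univ, mul_one]
      _ ≤ ∫⁻ x, ENNReal.ofReal ((f x - h x) ^ 2) ∂Q := lintegral_mono_ae hae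
end
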